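/- Let d, d_E ≥ 1, let ρ be any d×d complex matrix, let e be a unit vector of ℂ^{d_E}, and let U, V be unitary matrices on ℂ^d ⊗ ℂ^{d_E}. Then the generalised quantum operation output satisfies the trace-norm contraction ‖ Tr_E[ U (ρ ⊗ e e†) V† ] ‖₁ ≤ ‖ρ‖₁, where Tr_E denotes the partial trace over the second tensor factor ℂ^{d_E}. -/

import Mathlib

open Matrix
open scoped Kronecker ComplexOrder

set_option linter.unusedSectionVars false
set_option linter.unusedVariables false
set_option maxHeartbeats 1600000

/-- Partial trace over the second (ancilla) tensor factor. -/
noncomputable def ptraceE {ι κ : Type*} [Fintype κ] (X : Matrix (ι × κ) (ι × κ) ℂ) :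
    Matrix ι ι ℂ :=
  Matrix.of fun i j => ∑ k, X (i, k) (j, k)

/-- The trace norm `‖M‖₁ = Tr √(M Mᴴ)`. -/
noncomputable def traceNorm {m n : Type*} [Fintype m] [Fintype n] [DecidableEq m]
    (M : Matrix m n ℂ) : ℝ :=
  (((Matrix.posSemidef_self_mul_conjTranspose M).1.eigenvectorUnitary : Matrix m m ℂ) *
    Matrix.diagonal (((↑) : ℝ → ℂ) ∘ (√·) ∘ (Matrix.posSemidef_self_mul_conjTranspose M).1.eigenvalues) *
    (star (Matrix.posSemidef_self_mul_conjTranspose M).1.eigenvectorUnitary : Matrix m m ℂ)).trace.re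

namespace TN
variable {n : Type*} [Fintype n] [DecidableEq n]

noncomputable def nsq (x : n → ℂ) : ℝ := (star x ⬝ᵥ x).re
noncomputable def nrm (x : n → ℂ) : ℝ := Real.sqrt (nsq x)

lemma nsq_eq (x : n → ℂ) : nsq x = ∑ i, Complex.normSq (x i) := by
  simp [nsq, dotProduct, Complex.re_sum, Complex.normSq_apply]

lemma nsq_nonneg (x : n → ℂ) : 0 ≤ nsq x :=
  nsq_eq x ▸ Finset.sum_nonneg fun i _ => Complex.normSq_nonneg _

lemma nrm_eq_norm (x : n → ℂ) : nrm x = ‖(WithLp.equiv 2 (n → ℂ)).symm x‖ := by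
  have h : nsq x = RCLike.re (inner ℂ ((WithLp.equiv 2 (n → ℂ)).symm x) ((WithLp.equiv 2 (n → ℂ)).symm x) : ℂ) := by
    rw [WithLp.equiv_symm_apply, EuclideanSpace.inner_toLp_toLp, dotProduct_comm]; rfl
  rw [nrm, h, inner_self_eq_norm_sq (𝕜 := ℂ)]
  exact Real.sqrt_sq (norm_nonneg _)

lemma cauchy_schwarz (x y : n → ℂ) : ‖star x ⬝ᵥ y‖ ≤ nrm x * nrm y := by
  rw [nrm_eq_norm, nrm_eq_norm, dotProduct_comm, ← EuclideanSpace.inner_toLp_toLp]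
  exact norm_inner_le_norm _ _

lemma nrm_nonneg (x : n → ℂ) : 0 ≤ nrm x := Real.sqrt_nonneg _

lemma sq_nrm (x : n → ℂ) : nrm x ^ 2 = nsq x := Real.sq_sqrt (nsq_nonneg x)

lemma trace_sqrt_re {P : Matrix n n ℂ} (hP : P.PosSemidef) :
    (((hP.1.eigenvectorUnitary : Matrix n n ℂ) *
    Matrix.diagonal (((↑) : ℝ → ℂ) ∘ (√·) ∘ hP.1.eigenvalues) *
    (star hP.1.eigenvectorUnitary : Matrix n n ℂ)).trace).re = ∑ i, Real.sqrt (hP.1.eigenvalues i) := by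
  have h : ((hP.1.eigenvectorUnitary : Matrix n n ℂ) *
    Matrix.diagonal (((↑) : ℝ → ℂ) ∘ (√·) ∘ hP.1.eigenvalues) *
    (star hP.1.eigenvectorUnitary : Matrix n n ℂ)).trace = ∑ i, ((Real.sqrt (hP.1.eigenvalues i) : ℂ)) := by
    rw [Matrix.trace_mul_cycle]
    rw [Unitary.coe_star_mul_self, one_mul, Matrix.trace_diagonal]
    rfl
  rw [h, Complex.re_sum]
  simp

lemma diag_sandwich_mul (Q : Matrix n n ℂ) (hQ : star Q * Q = 1) (f g : n → ℂ) :
    (Q * diagonal f * star Q) * (Q * diagonal g * star Q)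
      = Q * diagonal (fun i => f i * g i) * star Q := by
  calc (Q * diagonal f * star Q) * (Q * diagonal g * star Q)
      = Q * (diagonal f * ((star Q * Q) * (diagonal g * star Q))) := by
        simp only [Matrix.mul_assoc]
    _ = Q * (diagonal f * diagonal g) * star Q := by
        rw [hQ, one_mul]; simp only [Matrix.mul_assoc]
    _ = _ := by rw [diagonal_mul_diagonal]

lemma star_dot_mulVec_self (M : Matrix n n ℂ) (x y : n → ℂ) :
    star (M *ᵥ x) ⬝ᵥ (M *ᵥ y) = star x ⬝ᵥ ((Mᴴ * M) *ᵥ y) := by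
  rw [star_mulVec, dotProduct_mulVec, vecMul_vecMul, ← dotProduct_mulVec]

lemma trace_mul_vecMulVec (W : Matrix n n ℂ) (x y : n → ℂ) :
    (W * vecMulVec x (star y)).trace = star y ⬝ᵥ (W *ᵥ x) := by
  simp only [Matrix.trace, Matrix.diag, Matrix.mul_apply, vecMulVec_apply,
    dotProduct, mulVec, Pi.star_apply]
  congr 1; ext i
  rw [Finset.mul_sum]
  congr 1; ext j
  ring

/-- quadratic form of a unitary-conjugated real diagonal with entries in `[0,1]`
is bounded by `nsq`. -/
lemma quad_bound (Q : Matrix n n ℂ) (hQ1 : star Q * Q = 1) (hQ2 : Q * star Q = 1)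
    (π : n → ℝ) (h0 : ∀ i, 0 ≤ π i) (h1 : ∀ i, π i ≤ 1) (x : n → ℂ) :
    (star x ⬝ᵥ ((Q * diagonal (fun i => (π i : ℂ)) * star Q) *ᵥ x)).re ≤ nsq x := by
  set y := star Q *ᵥ x with hy
  have key : star x ⬝ᵥ ((Q * diagonal (fun i => (π i : ℂ)) * star Q) *ᵥ x)
      = star y ⬝ᵥ (diagonal (fun i => (π i : ℂ)) *ᵥ y) := by
    rw [← Matrix.mulVec_mulVec, ← Matrix.mulVec_mulVec, dotProduct_mulVec (star x)]
    congr 1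
    rw [hy, star_mulVec, star_eq_conjTranspose, conjTranspose_conjTranspose]
  have hyx : nsq y = nsq x := by
    have h := star_dot_mulVec_self (star Q) x x
    rw [← star_eq_conjTranspose, star_star, hQ2, one_mulVec] at h
    simp [nsq, hy, h]
  rw [key, ← hyx, nsq_eq]
  have : (star y ⬝ᵥ (diagonal (fun i => (π i : ℂ)) *ᵥ y)).re
      = ∑ i, π i * Complex.normSq (y i) := by
    simp only [dotProduct, mulVec_diagonal, Pi.star_apply, Complex.re_sum]
    congr 1; ext i
    have : (starRingEnd ℂ) (y i) * ((π i : ℂ) * y i) = (π i : ℂ) * Complex.normSq (y i) := by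
      rw [Complex.normSq_eq_conj_mul_self]; ring
    rw [RCLike.star_def, this]
    simp
  rw [this]
  apply Finset.sum_le_sum
  intro i _
  nlinarith [Complex.normSq_nonneg (y i), h1 i, h0 i]

end TN

namespace TN2
open TN
variable {n : Type*} [Fintype n] [DecidableEq n]

lemma main_bound {t : Type*} [Fintype t] (N : Matrix n n ℂ) (a b : t → n → ℂ)
    (hN : N = ∑ i, vecMulVec (a i) (star (b i))) :
    traceNorm N ≤ ∑ i, nrm (a i) * nrm (b i) := by
  have hP := Matrix.posSemidef_self_mul_conjTranspose N
  set hH : (N * Nᴴ).IsHermitian := hP.1 with hHdef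
  set lam : n → ℝ := hH.eigenvalues with hlam
  set Q : Matrix n n ℂ := (hH.eigenvectorUnitary : Matrix n n ℂ) with hQdef
  have hQ1 : star Q * Q = 1 := Matrix.mem_unitaryGroup_iff'.mp hH.eigenvectorUnitary.2
  have hQ2 : Q * star Q = 1 := Matrix.mem_unitaryGroup_iff.mp hH.eigenvectorUnitary.2
  have hspec : N * Nᴴ = Q * diagonal (fun i => (lam i : ℂ)) * star Q := by
    have := hH.spectral_theorem
    rw [Unitary.conjStarAlgAut_apply] at this
    exact this
  set g : n → ℝ := fun i => (Real.sqrt (lam i))⁻¹ with hg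
  set Sp : Matrix n n ℂ := Q * diagonal (fun i => (g i : ℂ)) * star Q with hSp
  set W : Matrix n n ℂ := Nᴴ * Sp with hW
  have hlam0 : ∀ i, 0 ≤ lam i := fun i => hP.eigenvalues_nonneg i
  have hgl : ∀ i, lam i * g i = Real.sqrt (lam i) := by
    intro i
    rcases eq_or_lt_of_le (hlam0 i) with h | h
    · simp [hg, ← h]
    · have hs := Real.sqrt_pos.mpr h
      rw [hg]
      field_simp
      exact (Real.sq_sqrt h.le).symm
  -- Step A : trace (W * N) = trace of sqrt
  have hSandwich : N * Nᴴ * Sp = Q * diagonal (fun i => ((Real.sqrt (lam i) : ℂ))) * star Q := by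
    rw [hspec, hSp, diag_sandwich_mul Q hQ1]
    have : (fun i => ((lam i : ℂ)) * ((g i : ℂ))) = fun i => ((Real.sqrt (lam i) : ℂ)) := by
      funext i; rw [← hgl i]; push_cast; ring
    rw [this]
  have hA : (W * N).trace = (∑ i, ((Real.sqrt (lam i)) : ℂ)) := by
    have h1 : (W * N).trace = (N * Nᴴ * Sp).trace := by
      rw [hW, Matrix.trace_mul_cycle]
    rw [h1, hSandwich, Matrix.trace_mul_cycle, hQ1, one_mul, Matrix.trace_diagonal]
  -- traceNorm N = Σ √ lam
  have htn : traceNorm N = ∑ i, Real.sqrt (lam i) := trace_sqrt_re hP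
  -- Step B : WᴴW
  have hdiagH : ∀ f : n → ℝ, (diagonal (fun i => (f i : ℂ)))ᴴ = diagonal (fun i => (f i : ℂ)) := by
    intro f
    rw [diagonal_conjTranspose]
    have : (star fun i => ((f i : ℂ))) = fun i => ((f i : ℂ)) := by
      funext i
      simp [Complex.conj_ofReal]
    rw [this]
  have hSpH : Spᴴ = Sp := by
    show ((Q * diagonal (fun i => (g i : ℂ))) * star Q)ᴴ = (Q * diagonal (fun i => (g i : ℂ))) * star Q
    simp only [star_eq_conjTranspose, conjTranspose_mul, conjTranspose_conjTranspose,
      hdiagH g, Matrix.mul_assoc]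
  have hWW : Wᴴ * W = Q * diagonal (fun i => ((g i * lam i * g i : ℝ) : ℂ)) * star Q := by
    have h2 : Wᴴ * W = Sp * (N * Nᴴ) * Sp := by
      rw [hW, conjTranspose_mul, conjTranspose_conjTranspose, hSpH]
      simp only [Matrix.mul_assoc]
    rw [h2, hspec, hSp, diag_sandwich_mul Q hQ1, diag_sandwich_mul Q hQ1]
    congr 1
    congr 1
    funext i
    push_cast
    ring
  set π : n → ℝ := fun i => g i * lam i * g i with hπ
  have hππ : ∀ i, π i = Real.sqrt (lam i) * (Real.sqrt (lam i))⁻¹ := by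
    intro i
    show g i * lam i * g i = _
    rw [mul_comm (g i) (lam i), hgl i]
  have hπ0 : ∀ i, 0 ≤ π i := by
    intro i
    rw [hππ i]
    positivity
  have hπ1 : ∀ i, π i ≤ 1 := by
    intro i
    rcases eq_or_ne (Real.sqrt (lam i)) 0 with h0 | h0
    · rw [hππ i, h0]; simp
    · rw [hππ i, mul_inv_cancel₀ h0]
  have hWcontract : ∀ x : n → ℂ, nsq (W *ᵥ x) ≤ nsq x := by
    intro x
    have h1 : nsq (W *ᵥ x) = (star x ⬝ᵥ ((Wᴴ * W) *ᵥ x)).re := by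
      rw [nsq, star_dot_mulVec_self]
    rw [h1, hWW]
    exact quad_bound Q hQ1 hQ2 π hπ0 hπ1 x
  have htr : (W * N).trace = ∑ i, (star (b i) ⬝ᵥ (W *ᵥ a i)) := by
    rw [hN, Finset.mul_sum, Matrix.trace_sum]
    exact Finset.sum_congr rfl fun i _ => trace_mul_vecMulVec W (a i) (b i)
  have hfin : traceNorm N = (∑ i, star (b i) ⬝ᵥ (W *ᵥ a i)).re := by
    rw [← htr, hA, htn, Complex.re_sum]
    simp
  rw [hfin, Complex.re_sum]
  apply Finset.sum_le_sum
  intro i _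
  calc (star (b i) ⬝ᵥ (W *ᵥ a i)).re
      ≤ ‖star (b i) ⬝ᵥ (W *ᵥ a i)‖ := Complex.re_le_norm _
    _ ≤ nrm (b i) * nrm (W *ᵥ a i) := cauchy_schwarz _ _
    _ ≤ nrm (b i) * nrm (a i) := by
        apply mul_le_mul_of_nonneg_left _ (nrm_nonneg _)
        exact Real.sqrt_le_sqrt (hWcontract (a i))
    _ = nrm (a i) * nrm (b i) := mul_comm _ _
end TN2

namespace TN3
open TN TN2
open scoped Kronecker

variable {m p : Type*} [Fintype m] [Fintype p] [DecidableEq m] [DecidableEq p]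

lemma sandwich_rankOne (M N : Matrix m m ℂ) (x y : m → ℂ) :
    M * vecMulVec x (star y) * Nᴴ = vecMulVec (M *ᵥ x) (star (N *ᵥ y)) := by
  ext q r
  simp only [mul_apply, vecMulVec_apply, conjTranspose_apply, Pi.star_apply, mulVec, dotProduct,
    RCLike.star_def, map_sum]
  rw [Finset.sum_mul_sum]
  simp only [Finset.sum_mul]
  rw [Finset.sum_comm]
  congr 1; ext s
  congr 1; ext t
  rw [_root_.map_mul]
  ring

lemma kron_rankOne (a b : m → ℂ) (e f : p → ℂ) :
    vecMulVec a (star b) ⊗ₖ vecMulVec e (star f)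
      = vecMulVec (fun q : m × p => a q.1 * e q.2) (star fun q : m × p => b q.1 * f q.2) := by
  ext q r
  simp only [kroneckerMap_apply, vecMulVec_apply, Pi.star_apply, RCLike.star_def,
    _root_.map_mul]
  ring

lemma ptraceE_rankOne {d dE : ℕ} (x y : (Fin d × Fin dE) → ℂ) :
    (Matrix.of fun i j => ∑ k, vecMulVec x (star y) (i, k) (j, k))
      = ∑ ik : Fin dE, vecMulVec (fun q => x (q, ik)) (star fun q => y (q, ik)) := by
  ext i j
  simp [Matrix.sum_apply, vecMulVec_apply]

lemma nsq_prod (x : m → ℂ) (e : p → ℂ) :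
    nsq (fun q : m × p => x q.1 * e q.2) = nsq x * nsq e := by
  simp only [nsq_eq, Complex.normSq_mul, Fintype.sum_prod_type, ← Finset.mul_sum]
  rw [← Finset.sum_mul]

lemma nsq_mulVec_unitary {M : Matrix m m ℂ} (hM : M ∈ Matrix.unitaryGroup m ℂ) (x : m → ℂ) :
    nsq (M *ᵥ x) = nsq x := by
  have h := star_dot_mulVec_self M x x
  rw [← star_eq_conjTranspose] at h
  rw [Matrix.mem_unitaryGroup_iff'.mp hM] at h
  rw [nsq, h, one_mulVec, nsq]

/-- real Cauchy–Schwarz for sums of square roots -/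
lemma sum_sqrt_mul_sqrt_le {κ : Type*} [Fintype κ] (f g : κ → ℝ) (hf : ∀ k, 0 ≤ f k)
    (hg : ∀ k, 0 ≤ g k) :
    ∑ k, Real.sqrt (f k) * Real.sqrt (g k) ≤ Real.sqrt (∑ k, f k) * Real.sqrt (∑ k, g k) := by
  have h := Finset.sum_sq_le_sum_mul_sum_of_sq_eq_mul Finset.univ
      (r := fun k => Real.sqrt (f k) * Real.sqrt (g k)) (f := f) (g := g)
      (fun i _ => hf i) (fun i _ => hg i)
      (fun i _ => by rw [mul_pow, Real.sq_sqrt (hf i), Real.sq_sqrt (hg i)])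
  have h2 := Real.sqrt_le_sqrt h
  rwa [Real.sqrt_sq (Finset.sum_nonneg fun i _ =>
      mul_nonneg (Real.sqrt_nonneg _) (Real.sqrt_nonneg _)),
    Real.sqrt_mul (Finset.sum_nonneg fun i _ => hf i)] at h2

end TN3

namespace TN4
open TN TN2 TN3
open scoped Kronecker

variable {m p : Type*} [Fintype m] [Fintype p] [DecidableEq m] [DecidableEq p]

lemma sum_kron {t : Type*} [Fintype t] (f : t → Matrix m m ℂ) (E : Matrix p p ℂ) :
    (∑ i, f i) ⊗ₖ E = ∑ i, (f i ⊗ₖ E) := by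
  ext q r
  simp [kroneckerMap_apply, Matrix.sum_apply, Finset.sum_mul]

lemma ptraceE_sum {ι κ t : Type*} [Fintype κ] [Fintype t] (f : t → Matrix (ι × κ) (ι × κ) ℂ) :
    ptraceE (∑ i, f i) = ∑ i, ptraceE (f i) := by
  ext q r
  simp [ptraceE, Matrix.sum_apply]
  rw [Finset.sum_comm]

end TN4

open TN TN2 TN3 TN4

/-- **Trace-norm contraction of generalised quantum operations.** -/
theorem stmt9 (d dE : ℕ) (hd : 0 < d) (hdE : 0 < dE)
    (ρ : Matrix (Fin d) (Fin d) ℂ)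
    (e : Fin dE → ℂ) (he : star e ⬝ᵥ e = 1)
    (U V : Matrix (Fin d × Fin dE) (Fin d × Fin dE) ℂ)
    (hU : U ∈ Matrix.unitaryGroup (Fin d × Fin dE) ℂ)
    (hV : V ∈ Matrix.unitaryGroup (Fin d × Fin dE) ℂ) :
    traceNorm (ptraceE (U * (ρ ⊗ₖ Matrix.vecMulVec e (star e)) * Vᴴ)) ≤ traceNorm ρ := by
  have hP := Matrix.posSemidef_self_mul_conjTranspose ρ
  set hH : (ρ * ρᴴ).IsHermitian := hP.1 with hHdef
  set lam : Fin d → ℝ := hH.eigenvalues with hlam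
  set Q : Matrix (Fin d) (Fin d) ℂ := (hH.eigenvectorUnitary : Matrix (Fin d) (Fin d) ℂ)
    with hQdef
  have hQ2 : Q * star Q = 1 := Matrix.mem_unitaryGroup_iff.mp hH.eigenvectorUnitary.2
  set u : Fin d → Fin d → ℂ := fun i => ⇑(hH.eigenvectorBasis i) with hu
  set bb : Fin d → Fin d → ℂ := fun i => ρᴴ *ᵥ u i with hbb
  -- rank-one decomposition of ρ
  have hdecomp : ρ = ∑ i, vecMulVec (u i) (star (bb i)) := by
    ext q r
    rw [Matrix.sum_apply]
    have hterm : ∀ i, vecMulVec (u i) (star (bb i)) q r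
        = ∑ k, u i q * (ρ k r * (starRingEnd ℂ) (u i k)) := by
      intro i
      rw [vecMulVec_apply]
      have hbbr : bb i r = ∑ k, (starRingEnd ℂ) (ρ k r) * u i k := by
        show (ρᴴ *ᵥ u i) r = _
        simp [mulVec, dotProduct, conjTranspose_apply, RCLike.star_def]
      have : star (bb i) r = ∑ k, ρ k r * (starRingEnd ℂ) (u i k) := by
        show star (bb i r) = _
        rw [hbbr, star_sum]
        congr 1; ext k
        simp only [star_mul', RCLike.star_def, Complex.conj_conj]
      rw [this, Finset.mul_sum]
    rw [Finset.sum_congr rfl fun i _ => hterm i, Finset.sum_comm]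
    symm
    have hQQ : ∀ k, (∑ i, u i q * (starRingEnd ℂ) (u i k))
        = (1 : Matrix (Fin d) (Fin d) ℂ) q k := by
      intro k
      have h1 : (Q * star Q) q k = ∑ i, u i q * (starRingEnd ℂ) (u i k) := by
        simp [mul_apply, star_eq_conjTranspose, conjTranspose_apply, RCLike.star_def, hQdef,
          Matrix.IsHermitian.eigenvectorUnitary_apply]
        rfl
      rw [← h1, hQ2]
    calc ∑ k, ∑ i, u i q * (ρ k r * (starRingEnd ℂ) (u i k))
        = ∑ k, (∑ i, u i q * (starRingEnd ℂ) (u i k)) * ρ k r := by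
          congr 1; ext k
          rw [Finset.sum_mul]
          congr 1; ext i
          ring
      _ = ∑ k, (1 : Matrix (Fin d) (Fin d) ℂ) q k * ρ k r := by
          congr 1; ext k
          rw [hQQ k]
      _ = ρ q r := by
          simp [Matrix.one_apply]
  -- dot products of the eigenvectors
  have hdot : ∀ i, star (u i) ⬝ᵥ u i = 1 := by
    intro i
    have horth := hH.eigenvectorBasis.orthonormal.1 i
    have h2 := EuclideanSpace.inner_eq_star_dotProduct (hH.eigenvectorBasis i)
      (hH.eigenvectorBasis i)
    rw [inner_self_eq_norm_sq_to_K, horth] at h2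
    rw [dotProduct_comm]
    simpa using h2.symm
  have hui : ∀ i, nsq (u i) = 1 := by
    intro i
    rw [nsq, hdot i]
    simp
  have hbbi : ∀ i, nsq (bb i) = lam i := by
    intro i
    have h1 := star_dot_mulVec_self ρᴴ (u i) (u i)
    rw [conjTranspose_conjTranspose] at h1
    have h2 : (ρ * ρᴴ) *ᵥ u i = lam i • u i := hH.mulVec_eigenvectorBasis i
    rw [nsq]
    show (star (ρᴴ *ᵥ u i) ⬝ᵥ (ρᴴ *ᵥ u i)).re = lam i
    rw [h1, h2, dotProduct_smul, hdot i]
    simp [Complex.real_smul]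
  have he1 : nsq e = 1 := by
    rw [nsq, he]
    simp
  -- tensor and sandwich
  set w : Fin d → (Fin d × Fin dE) → ℂ := fun i q => u i q.1 * e q.2 with hw
  set z : Fin d → (Fin d × Fin dE) → ℂ := fun i q => bb i q.1 * e q.2 with hz
  have hX : ρ ⊗ₖ Matrix.vecMulVec e (star e) = ∑ i, vecMulVec (w i) (star (z i)) := by
    rw [hdecomp, sum_kron]
    exact Finset.sum_congr rfl fun i _ => kron_rankOne (u i) (bb i) e e
  have hY : U * (ρ ⊗ₖ Matrix.vecMulVec e (star e)) * Vᴴ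
      = ∑ i, vecMulVec (U *ᵥ w i) (star (V *ᵥ z i)) := by
    rw [hX, Finset.mul_sum, Finset.sum_mul]
    exact Finset.sum_congr rfl fun i _ => sandwich_rankOne U V (w i) (z i)
  set A : Fin d × Fin dE → (Fin d) → ℂ := fun ik q => (U *ᵥ w ik.1) (q, ik.2) with hA
  set B : Fin d × Fin dE → (Fin d) → ℂ := fun ik q => (V *ᵥ z ik.1) (q, ik.2) with hB
  have hZ : ptraceE (U * (ρ ⊗ₖ Matrix.vecMulVec e (star e)) * Vᴴ)
      = ∑ ik : Fin d × Fin dE, vecMulVec (A ik) (star (B ik)) := by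
    rw [hY, ptraceE_sum, Fintype.sum_prod_type]
    exact Finset.sum_congr rfl fun i _ => ptraceE_rankOne (U *ᵥ w i) (V *ᵥ z i)
  refine le_trans (main_bound _ A B hZ) ?_
  rw [Fintype.sum_prod_type]
  have hsplitA : ∀ i, ∑ k, nsq (A (i, k)) = nsq (U *ᵥ w i) := by
    intro i
    rw [nsq_eq (U *ᵥ w i), Fintype.sum_prod_type, Finset.sum_comm]
    simp only [nsq_eq, hA]
  have hsplitB : ∀ i, ∑ k, nsq (B (i, k)) = nsq (V *ᵥ z i) := by
    intro i
    rw [nsq_eq (V *ᵥ z i), Fintype.sum_prod_type, Finset.sum_comm]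
    simp only [nsq_eq, hB]
  have hstep : ∀ i, ∑ k, nrm (A (i, k)) * nrm (B (i, k))
      ≤ nrm (U *ᵥ w i) * nrm (V *ᵥ z i) := by
    intro i
    have h := sum_sqrt_mul_sqrt_le (fun k => nsq (A (i, k))) (fun k => nsq (B (i, k)))
      (fun k => nsq_nonneg _) (fun k => nsq_nonneg _)
    rw [hsplitA i, hsplitB i] at h
    simpa [nrm] using h
  refine le_trans (Finset.sum_le_sum fun i _ => hstep i) ?_
  have hval : ∀ i : Fin d, nrm (U *ᵥ w i) * nrm (V *ᵥ z i) = Real.sqrt (lam i) := by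
    intro i
    have h1 : nsq (U *ᵥ w i) = 1 := by
      rw [nsq_mulVec_unitary hU]
      have := nsq_prod (u i) e
      rw [hui i, he1] at this
      simpa [hw] using this
    have h2 : nsq (V *ᵥ z i) = lam i := by
      rw [nsq_mulVec_unitary hV]
      have := nsq_prod (bb i) e
      rw [hbbi i, he1] at this
      simpa [hz] using this
    rw [nrm, nrm, h1, h2]
    simp
  rw [Finset.sum_congr rfl fun i _ => hval i]
  exact le_of_eq (trace_sqrt_re hP).symm
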